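/- Let n, b, c be positive integers with b < c, b ≤ n/2, and suppose m₁ is an integer with m₁ − 1 < n/c ≤ m₁ < n/b < m₁ + 1. For j ≥ 1 let N_j be the number of integers in [jn/c, jn/b). Then N_{j+1} ≤ N_j + 2 for all j ≥ 1. -/
import Mathlib


theorem count_increment_le_two (n b c : ℕ) (m₁ : ℤ) (hb : 0 < b) (hbc : b < c)
    (hbn : 2 * b ≤ n)
    (h1 : (m₁ : ℚ) - 1 < (n : ℚ) / c) (h2 : (n : ℚ) / c ≤ (m₁ : ℚ))
    (h3 : (m₁ : ℚ) < (n : ℚ) / b) (h4 : (n : ℚ) / b < (m₁ : ℚ) + 1) :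
    ∀ j : ℕ, 1 ≤ j →
      (Finset.Ico ⌈(((j : ℚ) + 1) * n) / c⌉ ⌈(((j : ℚ) + 1) * n) / b⌉).card ≤
        (Finset.Ico ⌈((j : ℚ) * n) / c⌉ ⌈((j : ℚ) * n) / b⌉).card + 2 := by
  intro j hj
  have hB : ⌈(((j : ℚ) + 1) * n) / b⌉ ≤ ⌈((j : ℚ) * n) / b⌉ + m₁ + 1 := by
    apply Int.ceil_le.2
    have he : ((j : ℚ) + 1) * n / b = (j : ℚ) * n / b + n / b := by ring
    have hc := Int.le_ceil ((j : ℚ) * n / b)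
    rw [he]
    push_cast
    linarith
  have hC : ⌈((j : ℚ) * n) / c⌉ + m₁ - 1 ≤ ⌈(((j : ℚ) + 1) * n) / c⌉ := by
    have h : ((⌈((j : ℚ) * n) / c⌉ + m₁ - 2 : ℤ) : ℚ) < ((j : ℚ) + 1) * n / c := by
      have hlt : ((⌈((j : ℚ) * n) / c⌉ : ℚ)) < (j : ℚ) * n / c + 1 :=
        Int.ceil_lt_add_one _
      have he : ((j : ℚ) + 1) * n / c = (j : ℚ) * n / c + n / c := by ring
      rw [he]
      push_cast
      linarith
    have := Int.lt_ceil.2 h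
    omega
  rw [Int.card_Ico, Int.card_Ico]
  omega
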